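/- The estimator V₁ = N⁻¹ ∑_{n=1}^N f(Xₙ) f(X'ₙ) − μ̂² satisfies E[V₁] = σ_Y² − σ²/N. -/

import Mathlib

open MeasureTheory ProbabilityTheory Filter Topology ENNReal

private lemma aux_int_mul {α : Type*} {m : MeasurableSpace α} {μ : Measure α} {u v : α → ℝ}
    (hu : MemLp u 2 μ) (hv : MemLp v 2 μ) :
    Integrable (fun a => u a * v a) μ := by
  have h := (hu.integrable_sq.add hv.integrable_sq).const_mul (1/2 : ℝ)
  refine h.mono' (hu.aestronglyMeasurable.mul hv.aestronglyMeasurable) ?_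
  filter_upwards with a
  simp only [norm_mul, Real.norm_eq_abs]
  simp only [Pi.add_apply]
  nlinarith [sq_nonneg (|u a| - |v a|), sq_abs (u a), sq_abs (v a)]

private lemma aux_cs {α : Type*} {m : MeasurableSpace α} {μ : Measure α} {u v : α → ℝ}
    (hu : MemLp u 2 μ) (hv : MemLp v 2 μ) :
    |∫ a, u a * v a ∂μ| ≤ (eLpNorm u 2 μ).toReal * (eLpNorm v 2 μ).toReal := by
  have h1 : ∫ a, u a * v a ∂μ = inner (𝕜 := ℝ) (hu.toLp u) (hv.toLp v) := by
    rw [L2.inner_def]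
    apply integral_congr_ae
    filter_upwards [hu.coeFn_toLp, hv.coeFn_toLp] with a ha hb
    rw [ha, hb, RCLike.inner_apply, RCLike.conj_to_real, mul_comm]
  rw [h1]
  calc |inner (𝕜 := ℝ) (hu.toLp u) (hv.toLp v)| ≤ ‖hu.toLp u‖ * ‖hv.toLp v‖ :=
        abs_real_inner_le_norm _ _
    _ = _ := by rw [Lp.norm_toLp, Lp.norm_toLp]

private lemma aux_sq_int {α : Type*} {m : MeasurableSpace α} {μ : Measure α} {u : α → ℝ}
    (hu : MemLp u 2 μ) :
    (eLpNorm u 2 μ).toReal = Real.sqrt (∫ a, u a * u a ∂μ) := by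
  have h1 : ∫ a, u a * u a ∂μ = inner (𝕜 := ℝ) (hu.toLp u) (hu.toLp u) := by
    rw [L2.inner_def]
    apply integral_congr_ae
    filter_upwards [hu.coeFn_toLp] with a ha
    rw [ha, RCLike.inner_apply, RCLike.conj_to_real]
  rw [h1, real_inner_self_eq_norm_sq, Real.sqrt_sq (norm_nonneg _), Lp.norm_toLp]

private lemma aux_condexp_L2 {α : Type*} {m m0 : MeasurableSpace α} (hm : m ≤ m0)
    (μ : Measure α) [IsFiniteMeasure μ] {g : α → ℝ} (hg : MemLp g 2 μ) :
    MemLp (μ[g|m]) 2 μ ∧ eLpNorm (μ[g|m]) 2 μ ≤ eLpNorm g 2 μ := by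
  have hae : μ[g|m] =ᵐ[μ] ((condExpL2 ℝ ℝ hm (hg.toLp g) : lpMeas ℝ ℝ m 2 μ) : α → ℝ) := by
    refine (ae_eq_condExp_of_forall_setIntegral_eq hm (hg.integrable one_le_two)
      (fun s _ hμs => integrableOn_condExpL2_of_measure_ne_top hm hμs.ne _)
      (fun s hs hμs => ?_) (aestronglyMeasurable_condExpL2 hm _)).symm
    rw [integral_condExpL2_eq hm (hg.toLp g) hs hμs.ne]
    exact setIntegral_congr_ae (hm s hs) (hg.coeFn_toLp.mono fun x hx _ => hx)
  constructor
  · exact (Lp.memLp _).ae_eq hae.symm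
  · calc eLpNorm (μ[g|m]) 2 μ
        = eLpNorm ((condExpL2 ℝ ℝ hm (hg.toLp g) : lpMeas ℝ ℝ m 2 μ) : α → ℝ) 2 μ :=
          eLpNorm_congr_ae hae
      _ ≤ eLpNorm (hg.toLp g : α → ℝ) 2 μ := eLpNorm_condExpL2_le hm _
      _ = eLpNorm g 2 μ := eLpNorm_congr_ae hg.coeFn_toLp

private noncomputable def trunc (M : ℕ) (x : ℝ) : ℝ := max (min x M) (-(M:ℝ))

private lemma trunc_meas (M : ℕ) : Measurable (trunc M) :=
  (measurable_id.min measurable_const).max measurable_const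

private lemma abs_trunc_le (M : ℕ) (x : ℝ) : |trunc M x| ≤ M := by
  unfold trunc
  rw [abs_le]
  refine ⟨le_max_right _ _, max_le ((min_le_right _ _)) (neg_le_self (Nat.cast_nonneg M))⟩

private lemma abs_trunc_le_abs (M : ℕ) (x : ℝ) : |trunc M x| ≤ |x| := by
  unfold trunc
  rw [abs_le]
  constructor
  · exact le_max_of_le_left (le_min (neg_abs_le x)
      ((neg_nonpos.2 (abs_nonneg x)).trans (Nat.cast_nonneg M)))
  · exact max_le ((min_le_left _ _).trans (le_abs_self x))
      ((neg_nonpos.2 (Nat.cast_nonneg M)).trans (abs_nonneg x))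

private lemma tendsto_trunc (x : ℝ) : Tendsto (fun M => trunc M x) atTop (𝓝 x) := by
  refine tendsto_atTop_of_eventually_const (i₀ := ⌈|x|⌉₊) fun M hM => ?_
  have h : |x| ≤ (M : ℝ) := (Nat.ceil_le.1 hM)
  rw [abs_le] at h
  unfold trunc
  rw [min_eq_left h.2, max_eq_left (by linarith [h.1])]

/-- `E[V₁] = σ_Y² - σ²/N` where `V₁ = N⁻¹ ∑ₙ f(Xₙ) f(X'ₙ) - μ̂²`. -/
theorem estimator_V1_bias
    {Ω E F : Type*} (𝓖 : MeasurableSpace Ω)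
    [MeasurableSpace Ω] [MeasurableSpace E] [MeasurableSpace F]
    (P : Measure Ω) [IsProbabilityMeasure P]
    (Y : Ω → E) (X X' : Ω → F) (f : F → ℝ)
    (hY : Measurable Y) (hX : Measurable X) (hX' : Measurable X') (hf : Measurable f)
    (hL2 : MemLp (fun ω => f (X ω)) 2 P) (hL2' : MemLp (fun ω => f (X' ω)) 2 P)
    (h𝓖 : 𝓖 = MeasurableSpace.comap Y inferInstance)
    -- conditional independence of `X` and `X'` given `𝓖 = σ(Y)`
    (hCondIndep : ∀ g h : F → ℝ, Measurable g → Measurable h →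
      (∃ C, ∀ x, |g x| ≤ C) → (∃ C, ∀ x, |h x| ≤ C) →
      P[(fun ω => g (X ω) * h (X' ω))|𝓖]
        =ᵐ[P] fun ω => ((P[(fun ω' => g (X ω'))|𝓖]) ω) * ((P[(fun ω' => h (X' ω'))|𝓖]) ω))
    -- `X` and `X'` have the same conditional distribution given `𝓖`
    (hSameCondDist : ∀ g : F → ℝ, Measurable g → (∃ C, ∀ x, |g x| ≤ C) →
      P[(fun ω => g (X ω))|𝓖] =ᵐ[P] P[(fun ω => g (X' ω))|𝓖])
    (μ σ2 σY2 : ℝ) (hμ : μ = ∫ ω, f (X ω) ∂P)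
    (hσ2 : σ2 = variance (fun ω => f (X ω)) P)
    (hσY2 : σY2 = variance (P[(fun ω => f (X ω))|𝓖]) P)
    (N : ℕ) (hN : 0 < N)
    -- i.i.d. sample triples `(Yₙ, Xₙ, X'ₙ)` with the same joint distribution as `(Y, X, X')`
    (Ys : Fin N → Ω → E) (Xs Xs' : Fin N → Ω → F)
    (hYs : ∀ n, Measurable (Ys n)) (hXs : ∀ n, Measurable (Xs n)) (hXs' : ∀ n, Measurable (Xs' n))
    (hIndep : iIndepFun (fun n ω => (Ys n ω, Xs n ω, Xs' n ω)) P)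
    (hIdent : ∀ n, Measure.map (fun ω => (Ys n ω, Xs n ω, Xs' n ω)) P
        = Measure.map (fun ω => (Y ω, X ω, X' ω)) P)
    (muHat muHat' : Ω → ℝ)
    (hmuHat : ∀ ω, muHat ω = (N : ℝ)⁻¹ * ∑ n, f (Xs n ω))
    (hmuHat' : ∀ ω, muHat' ω = (N : ℝ)⁻¹ * ∑ n, f (Xs' n ω))
    :
    ∫ ω, ((N : ℝ)⁻¹ * ∑ n, f (Xs n ω) * f (Xs' n ω) - muHat ω ^ 2) ∂P = σY2 - σ2 / (N : ℝ) := by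
  have hm : 𝓖 ≤ ‹MeasurableSpace Ω› := h𝓖 ▸ hY.comap_le
  haveI : SigmaFinite (P.trim hm) := inferInstance
  have hfX : Measurable (fun ω => f (X ω)) := hf.comp hX
  have hfX' : Measurable (fun ω => f (X' ω)) := hf.comp hX'
  set c : Ω → ℝ := P[(fun ω => f (X ω))|𝓖] with hc
  have hcL2 : MemLp c 2 P := (aux_condexp_L2 hm P hL2).1
  -- truncated functions
  set g : ℕ → F → ℝ := fun M x => trunc M (f x) with hg
  have hgmeas : ∀ M, Measurable (g M) := fun M => (trunc_meas M).comp hf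
  have hgbd : ∀ M : ℕ, ∃ C, ∀ x, |g M x| ≤ C := fun M => ⟨M, fun x => abs_trunc_le M (f x)⟩
  have hgXL2 : ∀ M, MemLp (fun ω => g M (X ω)) 2 P := fun M =>
    hL2.of_le ((hgmeas M).comp hX).aestronglyMeasurable
      (Eventually.of_forall fun ω => by
        simpa [Real.norm_eq_abs] using abs_trunc_le_abs M (f (X ω)))
  have hgX'L2 : ∀ M, MemLp (fun ω => g M (X' ω)) 2 P := fun M =>
    hL2'.of_le ((hgmeas M).comp hX').aestronglyMeasurable
      (Eventually.of_forall fun ω => by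
        simpa [Real.norm_eq_abs] using abs_trunc_le_abs M (f (X' ω)))
  set cM : ℕ → Ω → ℝ := fun M => P[(fun ω => g M (X ω))|𝓖] with hcM
  have hcML2 : ∀ M, MemLp (cM M) 2 P := fun M => (aux_condexp_L2 hm P (hgXL2 M)).1
  -- key identity per M
  have hMeq : ∀ M : ℕ, ∫ ω, g M (X ω) * g M (X' ω) ∂P = ∫ ω, cM M ω * cM M ω ∂P := by
    intro M
    have hint : Integrable (fun ω => g M (X ω) * g M (X' ω)) P :=
      aux_int_mul (hgXL2 M) (hgX'L2 M)
    have e0 : ∫ ω, g M (X ω) * g M (X' ω) ∂P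
        = ∫ ω, (P[(fun ω => g M (X ω) * g M (X' ω))|𝓖]) ω ∂P := (integral_condExp hm).symm
    rw [e0]
    have h1 := hCondIndep (g M) (g M) (hgmeas M) (hgmeas M) (hgbd M) (hgbd M)
    have h2 := hSameCondDist (g M) (hgmeas M) (hgbd M)
    apply integral_congr_ae
    filter_upwards [h1, h2] with ω hω1 hω2
    rw [hω1, ← hω2]
  -- limit of LHS
  have hlim1 : Tendsto (fun M => ∫ ω, g M (X ω) * g M (X' ω) ∂P) atTop
      (𝓝 (∫ ω, f (X ω) * f (X' ω) ∂P)) := by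
    refine tendsto_integral_of_dominated_convergence
      (fun ω => ‖f (X ω)‖ * ‖f (X' ω)‖)
      (fun M => (((hgmeas M).comp hX).mul ((hgmeas M).comp hX')).aestronglyMeasurable)
      (aux_int_mul hL2.norm hL2'.norm) (fun M => Eventually.of_forall fun ω => ?_)
      (Eventually.of_forall fun ω => ?_)
    · rw [norm_mul]
      exact mul_le_mul (by simpa [Real.norm_eq_abs] using abs_trunc_le_abs M (f (X ω)))
        (by simpa [Real.norm_eq_abs] using abs_trunc_le_abs M (f (X' ω)))
        (norm_nonneg _) (abs_nonneg _)
    · exact (tendsto_trunc (f (X ω))).mul (tendsto_trunc (f (X' ω)))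
  -- L2 distance of truncation
  have hδlim : Tendsto (fun M => (eLpNorm (fun ω => g M (X ω) - f (X ω)) 2 P).toReal)
      atTop (𝓝 0) := by
    have hdL2 : ∀ M, MemLp (fun ω => g M (X ω) - f (X ω)) 2 P := fun M => (hgXL2 M).sub hL2
    have hDCT : Tendsto (fun M => ∫ ω, (g M (X ω) - f (X ω)) * (g M (X ω) - f (X ω)) ∂P)
        atTop (𝓝 0) := by
      have h0 : (0 : ℝ) = ∫ (_ : Ω), (0 : ℝ) ∂P := by simp
      rw [h0]
      refine tendsto_integral_of_dominated_convergence
        (fun ω => (2 * ‖f (X ω)‖) * (2 * ‖f (X ω)‖))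
        (fun M => ((hdL2 M).aestronglyMeasurable.mul (hdL2 M).aestronglyMeasurable))
        (aux_int_mul (hL2.norm.const_mul 2) (hL2.norm.const_mul 2))
        (fun M => Eventually.of_forall fun ω => ?_)
        (Eventually.of_forall fun ω => ?_)
      · have hb : |g M (X ω) - f (X ω)| ≤ 2 * |f (X ω)| := by
          have := abs_trunc_le_abs M (f (X ω))
          calc |g M (X ω) - f (X ω)| ≤ |g M (X ω)| + |f (X ω)| := abs_sub _ _
            _ ≤ 2 * |f (X ω)| := by linarith
        simp only [norm_mul, Real.norm_eq_abs]
        exact mul_le_mul hb hb (abs_nonneg _) (by positivity)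
      · have := (tendsto_trunc (f (X ω))).sub (tendsto_const_nhds (x := f (X ω)))
        simpa using this.mul this
    have hsqrt := (Real.continuous_sqrt.tendsto 0).comp hDCT
    rw [Real.sqrt_zero] at hsqrt
    refine hsqrt.congr fun M => ?_
    exact (aux_sq_int (hdL2 M)).symm
  -- limit of RHS
  have hlim2 : Tendsto (fun M => ∫ ω, cM M ω * cM M ω ∂P) atTop (𝓝 (∫ ω, c ω * c ω ∂P)) := by
    set K : ℝ := (eLpNorm (fun ω => f (X ω)) 2 P).toReal with hK
    have hbound : ∀ M : ℕ, |(∫ ω, cM M ω * cM M ω ∂P) - ∫ ω, c ω * c ω ∂P|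
        ≤ (2 * K) * (eLpNorm (fun ω => g M (X ω) - f (X ω)) 2 P).toReal := by
      intro M
      have hdL2 : MemLp (fun ω => g M (X ω) - f (X ω)) 2 P := (hgXL2 M).sub hL2
      have hsub : MemLp (fun ω => cM M ω - c ω) 2 P := (hcML2 M).sub hcL2
      have hadd : MemLp (fun ω => cM M ω + c ω) 2 P := (hcML2 M).add hcL2
      have heq : (∫ ω, cM M ω * cM M ω ∂P) - ∫ ω, c ω * c ω ∂P
          = ∫ ω, (cM M ω - c ω) * (cM M ω + c ω) ∂P := by
        rw [← integral_sub (aux_int_mul (hcML2 M) (hcML2 M)) (aux_int_mul hcL2 hcL2)]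
        congr 1; funext ω; ring
      rw [heq]
      calc |∫ ω, (cM M ω - c ω) * (cM M ω + c ω) ∂P|
          ≤ (eLpNorm (fun ω => cM M ω - c ω) 2 P).toReal
            * (eLpNorm (fun ω => cM M ω + c ω) 2 P).toReal := aux_cs hsub hadd
        _ ≤ (2 * K) * (eLpNorm (fun ω => g M (X ω) - f (X ω)) 2 P).toReal := by
            have hc1 : (eLpNorm (fun ω => cM M ω - c ω) 2 P).toReal
                ≤ (eLpNorm (fun ω => g M (X ω) - f (X ω)) 2 P).toReal := by
              have hce : (fun ω => cM M ω - c ω)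
                  =ᵐ[P] P[(fun ω => g M (X ω) - f (X ω))|𝓖] :=
                (condExp_sub ((hgXL2 M).integrable one_le_two)
                  (hL2.integrable one_le_two) 𝓖).symm
              have h1 : eLpNorm (fun ω => cM M ω - c ω) 2 P
                  ≤ eLpNorm (fun ω => g M (X ω) - f (X ω)) 2 P := by
                rw [eLpNorm_congr_ae hce]
                exact (aux_condexp_L2 hm P hdL2).2
              exact ENNReal.toReal_mono hdL2.eLpNorm_ne_top h1
            have hc2 : (eLpNorm (fun ω => cM M ω + c ω) 2 P).toReal ≤ 2 * K := by
              have h1 : eLpNorm (fun ω => cM M ω + c ω) 2 P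
                  ≤ 2 * eLpNorm (fun ω => f (X ω)) 2 P := by
                calc eLpNorm (fun ω => cM M ω + c ω) 2 P
                    ≤ eLpNorm (cM M) 2 P + eLpNorm c 2 P :=
                      eLpNorm_add_le (hcML2 M).aestronglyMeasurable
                        hcL2.aestronglyMeasurable one_le_two
                  _ ≤ eLpNorm (fun ω => f (X ω)) 2 P + eLpNorm (fun ω => f (X ω)) 2 P := by
                      gcongr
                      · exact ((aux_condexp_L2 hm P (hgXL2 M)).2).trans
                          (eLpNorm_mono_ae (Eventually.of_forall fun ω => by
                            simpa [Real.norm_eq_abs] using abs_trunc_le_abs M (f (X ω))))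
                      · exact (aux_condexp_L2 hm P hL2).2
                  _ = 2 * eLpNorm (fun ω => f (X ω)) 2 P := (two_mul _).symm
              have h2 : (2 : ENNReal) * eLpNorm (fun ω => f (X ω)) 2 P ≠ ⊤ :=
                ENNReal.mul_ne_top (by simp) hL2.eLpNorm_ne_top
              calc (eLpNorm (fun ω => cM M ω + c ω) 2 P).toReal
                  ≤ ((2 : ENNReal) * eLpNorm (fun ω => f (X ω)) 2 P).toReal :=
                    ENNReal.toReal_mono h2 h1
                _ = 2 * K := by rw [ENNReal.toReal_mul]; norm_num [hK]
            calc (eLpNorm (fun ω => cM M ω - c ω) 2 P).toReal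
                  * (eLpNorm (fun ω => cM M ω + c ω) 2 P).toReal
                ≤ (eLpNorm (fun ω => g M (X ω) - f (X ω)) 2 P).toReal * (2 * K) :=
                  mul_le_mul hc1 hc2 ENNReal.toReal_nonneg ENNReal.toReal_nonneg
              _ = (2 * K) * (eLpNorm (fun ω => g M (X ω) - f (X ω)) 2 P).toReal :=
                  mul_comm _ _
    have habs : Tendsto (fun M => |(∫ ω, cM M ω * cM M ω ∂P) - ∫ ω, c ω * c ω ∂P|)
        atTop (𝓝 0) := by
      refine squeeze_zero (fun M => abs_nonneg _) hbound ?_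
      have := hδlim.const_mul (2 * K)
      simpa using this
    rw [tendsto_iff_dist_tendsto_zero]
    simpa [Real.dist_eq] using habs
  -- the key identity
  have hA : ∫ ω, f (X ω) * f (X' ω) ∂P = ∫ ω, c ω * c ω ∂P := by
    refine tendsto_nhds_unique hlim1 ?_
    exact (hlim2.congr fun M => (hMeq M).symm)
  -- Part B: transfers via identical distribution and independence
  have hT : Measurable (fun ω => (Y ω, X ω, X' ω)) := hY.prodMk (hX.prodMk hX')
  have hTn : ∀ n, Measurable (fun ω => (Ys n ω, Xs n ω, Xs' n ω)) :=
    fun n => (hYs n).prodMk ((hXs n).prodMk (hXs' n))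
  have key : ∀ (n : Fin N) (φ : E × F × F → ℝ), Measurable φ →
      ∫ ω, φ (Ys n ω, Xs n ω, Xs' n ω) ∂P = ∫ ω, φ (Y ω, X ω, X' ω) ∂P := by
    intro n φ hφ
    rw [← integral_map (hTn n).aemeasurable hφ.aestronglyMeasurable, hIdent n,
      integral_map hT.aemeasurable hφ.aestronglyMeasurable]
  have memkey : ∀ (n : Fin N) (φ : E × F × F → ℝ), Measurable φ →
      MemLp (fun ω => φ (Y ω, X ω, X' ω)) 2 P →
      MemLp (fun ω => φ (Ys n ω, Xs n ω, Xs' n ω)) 2 P := by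
    intro n φ hφ hmem
    have h1 : MemLp φ 2 (Measure.map (fun ω => (Y ω, X ω, X' ω)) P) :=
      (memLp_map_measure_iff hφ.aestronglyMeasurable hT.aemeasurable).2 hmem
    rw [← hIdent n] at h1
    exact (memLp_map_measure_iff hφ.aestronglyMeasurable (hTn n).aemeasurable).1 h1
  have hφ1 : Measurable (fun p : E × F × F => f p.2.1) :=
    hf.comp (measurable_fst.comp measurable_snd)
  have hφ2 : Measurable (fun p : E × F × F => f p.2.2) :=
    hf.comp (measurable_snd.comp measurable_snd)
  have hMem : ∀ n, MemLp (fun ω => f (Xs n ω)) 2 P := fun n => memkey n _ hφ1 hL2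
  have hMem' : ∀ n, MemLp (fun ω => f (Xs' n ω)) 2 P := fun n => memkey n _ hφ2 hL2'
  have hInt1 : ∀ n, ∫ ω, f (Xs n ω) ∂P = μ := fun n => by
    rw [hμ]; exact key n _ hφ1
  have hSqn : ∀ n, ∫ ω, f (Xs n ω) * f (Xs n ω) ∂P = ∫ ω, f (X ω) * f (X ω) ∂P :=
    fun n => key n _ (hφ1.mul hφ1)
  have hProdn : ∀ n, ∫ ω, f (Xs n ω) * f (Xs' n ω) ∂P = ∫ ω, f (X ω) * f (X' ω) ∂P :=
    fun n => key n _ (hφ1.mul hφ2)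
  have hoff : ∀ n m : Fin N, n ≠ m → ∫ ω, f (Xs n ω) * f (Xs m ω) ∂P = μ * μ := by
    intro n m hnm
    have h1 : IndepFun (fun ω => (Ys n ω, Xs n ω, Xs' n ω))
        (fun ω => (Ys m ω, Xs m ω, Xs' m ω)) P := hIndep.indepFun hnm
    have h2 : IndepFun (fun ω => f (Xs n ω)) (fun ω => f (Xs m ω)) P := h1.comp hφ1 hφ1
    have h3 := h2.integral_mul_eq_mul_integral (hMem n).aestronglyMeasurable (hMem m).aestronglyMeasurable
    rw [show μ * μ = (∫ ω, f (Xs n ω) ∂P) * ∫ ω, f (Xs m ω) ∂P by rw [hInt1 n, hInt1 m]]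
    simpa [Pi.mul_apply] using h3
  -- integrability facts
  have hintn : ∀ n m : Fin N, Integrable (fun ω => f (Xs n ω) * f (Xs m ω)) P :=
    fun n m => aux_int_mul (hMem n) (hMem m)
  have hintp : ∀ n : Fin N, Integrable (fun ω => f (Xs n ω) * f (Xs' n ω)) P :=
    fun n => aux_int_mul (hMem n) (hMem' n)
  have hmuHat_eq : muHat = fun ω => (N : ℝ)⁻¹ * ∑ n, f (Xs n ω) := funext hmuHat
  have hmuHatL2 : MemLp muHat 2 P := by
    rw [hmuHat_eq]
    exact (memLp_finset_sum Finset.univ (fun n _ => hMem n)).const_mul _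
  -- second moment of muHat
  have hSum2 : ∫ ω, muHat ω ^ 2 ∂P
      = (N:ℝ)⁻¹ * (N:ℝ)⁻¹ * ((N:ℝ) * (∫ ω, f (X ω) * f (X ω) ∂P)
        + ((N:ℝ) * (N:ℝ) - (N:ℝ)) * (μ * μ)) := by
    have expand : ∀ ω, muHat ω ^ 2
        = (N:ℝ)⁻¹ * (N:ℝ)⁻¹ * ∑ n, ∑ m, f (Xs n ω) * f (Xs m ω) := by
      intro ω
      have h0 : ((N:ℝ)⁻¹ * ∑ n, f (Xs n ω)) ^ 2
          = (N:ℝ)⁻¹ * (N:ℝ)⁻¹ * ((∑ n, f (Xs n ω)) * (∑ m, f (Xs m ω))) := by ring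
      rw [hmuHat ω, h0, Finset.sum_mul_sum]
    have hinner : ∀ n : Fin N, ∑ m, ∫ ω, f (Xs n ω) * f (Xs m ω) ∂P
        = (∫ ω, f (X ω) * f (X ω) ∂P) + ((N:ℝ) - 1) * (μ * μ) := by
      intro n
      classical
      rw [← Finset.add_sum_erase _ _ (Finset.mem_univ n), hSqn n]
      congr 1
      rw [Finset.sum_congr rfl (fun m hm => hoff n m (Finset.ne_of_mem_erase hm).symm),
        Finset.sum_const, Finset.card_erase_of_mem (Finset.mem_univ n),
        Finset.card_univ, Fintype.card_fin, nsmul_eq_mul, Nat.cast_sub hN]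
      push_cast
      ring
    calc ∫ ω, muHat ω ^ 2 ∂P
        = ∫ ω, (N:ℝ)⁻¹ * (N:ℝ)⁻¹ * ∑ n, ∑ m, f (Xs n ω) * f (Xs m ω) ∂P := by
          exact integral_congr_ae (Eventually.of_forall expand)
      _ = (N:ℝ)⁻¹ * (N:ℝ)⁻¹ * ∑ n, ∑ m, ∫ ω, f (Xs n ω) * f (Xs m ω) ∂P := by
          rw [integral_const_mul]
          congr 1
          rw [integral_finset_sum _
            (fun n _ => integrable_finset_sum _ (fun m _ => hintn n m))]
          exact Finset.sum_congr rfl fun n _ => integral_finset_sum _ (fun m _ => hintn n m)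
      _ = (N:ℝ)⁻¹ * (N:ℝ)⁻¹ * ((N:ℝ) * (∫ ω, f (X ω) * f (X ω) ∂P)
            + ((N:ℝ) * (N:ℝ) - (N:ℝ)) * (μ * μ)) := by
          rw [Finset.sum_congr rfl fun n _ => hinner n, Finset.sum_const,
            Finset.card_univ, Fintype.card_fin, nsmul_eq_mul]
          ring
  -- variance formulas
  have hvar : ∀ (u : Ω → ℝ), MemLp u 2 P → variance u P
      = (∫ ω, u ω * u ω ∂P) - (∫ ω, u ω ∂P) * (∫ ω, u ω ∂P) := by
    intro u hu
    rw [variance_eq_sub hu]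
    congr 1
    · exact integral_congr_ae (Eventually.of_forall fun ω => by simp [pow_two])
    · exact pow_two _
  have hintc : ∫ ω, c ω ∂P = μ := by rw [hμ]; exact integral_condExp hm
  have hσ2' : σ2 = (∫ ω, f (X ω) * f (X ω) ∂P) - μ * μ := by
    rw [hσ2, hvar _ hL2, ← hμ]
  have hσY2' : σY2 = (∫ ω, f (X ω) * f (X' ω) ∂P) - μ * μ := by
    rw [hσY2, hvar _ hcL2, hintc, ← hA]
  -- final assembly
  have hintsum : Integrable (fun ω => (N:ℝ)⁻¹ * ∑ n, f (Xs n ω) * f (Xs' n ω)) P :=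
    (integrable_finset_sum _ (fun n _ => hintp n)).const_mul _
  have hintmu2 : Integrable (fun ω => muHat ω ^ 2) P := hmuHatL2.integrable_sq
  have hsplit : ∫ ω, ((N : ℝ)⁻¹ * ∑ n, f (Xs n ω) * f (Xs' n ω) - muHat ω ^ 2) ∂P
      = (∫ ω, (N : ℝ)⁻¹ * ∑ n, f (Xs n ω) * f (Xs' n ω) ∂P) - ∫ ω, muHat ω ^ 2 ∂P :=
    integral_sub hintsum hintmu2
  rw [hsplit, hSum2, integral_const_mul, integral_finset_sum _ (fun n _ => hintp n),
    Finset.sum_congr rfl (fun n _ => hProdn n), Finset.sum_const,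
    Finset.card_univ, Fintype.card_fin, nsmul_eq_mul, hσ2', hσY2']
  have hN0 : (N : ℝ) ≠ 0 := Nat.cast_ne_zero.2 hN.ne'
  field_simp
  ring
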